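/- Kinkelin's G-function satisfies the functional equation G̃(x+1) = G̃(x) · x^x for all x > 0, and G̃(0) = G̃(1) = 1. -/

import Mathlib

open Real

namespace KinkelinAux

open MeasureTheory Set Filter Topology intervalIntegral

noncomputable def f (t : ℝ) : ℝ := Real.log (Real.Gamma t)

lemma comp_eq : Real.log ∘ Real.Gamma = f := rfl

lemma contAt {x : ℝ} (hx : 0 < x) : ContinuousAt f x := by
  have h1 : ContinuousAt Real.Gamma x :=
    (Real.differentiableAt_Gamma fun m =>
      (ne_of_gt (lt_of_le_of_lt (neg_nonpos.mpr (Nat.cast_nonneg m)) hx))).continuousAt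
  exact (Real.continuousAt_log (Real.Gamma_pos_of_pos hx).ne').comp h1

lemma contOn : ContinuousOn f (Ioi (0:ℝ)) := fun x hx => (contAt hx).continuousWithinAt

lemma intervalIntegrable_log01 : IntervalIntegrable Real.log volume 0 1 := by
  rw [intervalIntegrable_iff_integrableOn_Ioc_of_le zero_le_one]
  have h : IntegrableOn (fun t : ℝ => -Real.log t) (Ioc (0:ℝ) 1) volume := by
    apply integrableOn_deriv_of_nonneg (g := fun t : ℝ => t - t * Real.log t)
    · exact (continuous_id.sub Real.continuous_mul_log).continuousOn
    · intro x hx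
      have h1 : HasDerivAt (fun t : ℝ => t * Real.log t) (Real.log x + 1) x :=
        Real.hasDerivAt_mul_log hx.1.ne'
      have : HasDerivAt (fun t : ℝ => t - t * Real.log t) _ x := (hasDerivAt_id x).sub h1
      convert this using 1; ring
    · intro x hx
      exact neg_nonneg.mpr (Real.log_nonpos hx.1.le hx.2.le)
  exact MeasureTheory.IntegrableOn.congr_fun h.neg (fun t _ => by simp) measurableSet_Ioc

lemma f_eq_on01 : ∀ t ∈ Ioc (0:ℝ) 1, f t = Real.log (Real.Gamma (t+1)) - Real.log t := by
  intro t ht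
  have hg : Real.Gamma (t+1) = t * Real.Gamma t := Real.Gamma_add_one ht.1.ne'
  rw [f, hg, Real.log_mul ht.1.ne' (Real.Gamma_pos_of_pos ht.1).ne']
  ring

lemma intOn01 : IntegrableOn f (Ioc (0:ℝ) 1) volume := by
  have hc : IntegrableOn (fun t => Real.log (Real.Gamma (t+1))) (Ioc (0:ℝ) 1) volume := by
    apply IntegrableOn.mono_set (t := Icc (0:ℝ) 1) _ Ioc_subset_Icc_self
    apply ContinuousOn.integrableOn_Icc
    have : ContinuousOn (f ∘ fun s : ℝ => s + 1) (Icc 0 1) :=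
      contOn.comp ((continuous_id.add continuous_const).continuousOn)
        (fun t ht => mem_Ioi.mpr (by linarith [ht.1]))
    exact this
  have hl : IntegrableOn Real.log (Ioc (0:ℝ) 1) volume := by
    have := intervalIntegrable_log01
    rwa [intervalIntegrable_iff_integrableOn_Ioc_of_le zero_le_one] at this
  exact MeasureTheory.IntegrableOn.congr_fun (hc.sub hl)
    (fun t ht => by simpa [Pi.sub_apply] using (f_eq_on01 t ht).symm) measurableSet_Ioc

lemma intInt0 {b : ℝ} (hb : 0 ≤ b) : IntervalIntegrable f volume 0 b := by
  rcases le_or_gt b 1 with h | h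
  · rw [intervalIntegrable_iff_integrableOn_Ioc_of_le hb]
    exact intOn01.mono_set (Ioc_subset_Ioc_right h)
  · refine IntervalIntegrable.trans (b := 1) ?_ ?_
    · rw [intervalIntegrable_iff_integrableOn_Ioc_of_le zero_le_one]; exact intOn01
    · apply ContinuousOn.intervalIntegrable
      apply contOn.mono
      rw [uIcc_of_le h.le]
      intro t ht; exact lt_of_lt_of_le one_pos ht.1

lemma intInt {a b : ℝ} (ha : 0 ≤ a) (hb : 0 ≤ b) : IntervalIntegrable f volume a b :=
  (intInt0 ha).symm.trans (intInt0 hb)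

noncomputable def I (x : ℝ) : ℝ := ∫ t in (0:ℝ)..x, f t

noncomputable def F (x : ℝ) : ℝ := ∫ t in x..(x+1), f t

lemma F_eq {x : ℝ} (hx : 0 ≤ x) : F x = I (x+1) - I x := by
  rw [F, I, I, integral_interval_sub_left (intInt0 (by linarith)) (intInt0 hx)]

noncomputable def H (x : ℝ) : ℝ := F x - (x * Real.log x - x)

lemma hasDerivI {x : ℝ} (hx : 0 < x) : HasDerivAt I (f x) x :=
  integral_hasDerivAt_right (intInt le_rfl hx.le)
    (contOn.stronglyMeasurableAtFilter isOpen_Ioi x hx) (contAt hx)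

lemma hasDerivH {x : ℝ} (hx : 0 < x) : HasDerivAt H 0 x := by
  have h1 : HasDerivAt (fun y : ℝ => I (y+1)) (f (x+1)) x := by
    have := (hasDerivI (by linarith : (0:ℝ) < x + 1)).comp x
      ((hasDerivAt_id x).add_const 1)
    rw [mul_one] at this; exact this
  have h2 := hasDerivI hx
  have h3 : HasDerivAt (fun y : ℝ => y * Real.log y - y) (Real.log x) x := by
    have : HasDerivAt (fun y : ℝ => y * Real.log y - y) _ x :=
      (Real.hasDerivAt_mul_log hx.ne').sub (hasDerivAt_id x)
    convert this using 1; ring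
  have h4 := (h1.sub h2).sub h3
  have hval : f (x+1) - f x - Real.log x = 0 := by
    have hg : Real.Gamma (x+1) = x * Real.Gamma x := Real.Gamma_add_one hx.ne'
    rw [f, f, hg, Real.log_mul hx.ne' (Real.Gamma_pos_of_pos hx).ne']
    ring
  rw [hval] at h4
  have heq : H =ᶠ[𝓝 x] fun y => (I (y+1) - I y) - (y * Real.log y - y) := by
    filter_upwards [isOpen_Ioi.eventually_mem hx] with y hy
    rw [H, F_eq (le_of_lt hy)]
  exact h4.congr_of_eventuallyEq heq

lemma H_const {x y : ℝ} (hx : 0 < x) (hy : 0 < y) : H x = H y := by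
  suffices h : ∀ a b : ℝ, 0 < a → a < b → H a = H b by
    rcases lt_trichotomy x y with hlt | heq | hgt
    · exact h x y hx hlt
    · rw [heq]
    · exact (h y x hy hgt).symm
  intro a b ha hab
  have hcont : ContinuousOn H (Icc a b) := fun z hz =>
    (hasDerivH (lt_of_lt_of_le ha hz.1)).continuousAt.continuousWithinAt
  have hderiv : ∀ z ∈ Ioo a b, HasDerivAt H ((fun _ : ℝ => (0:ℝ)) z) z := fun z hz =>
    hasDerivH (lt_trans ha hz.1)
  obtain ⟨c, _, hc⟩ := exists_hasDerivAt_eq_slope H (fun _ => (0:ℝ)) hab hcont hderiv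
  have := hc.symm
  rw [div_eq_iff (sub_ne_zero.mpr hab.ne')] at this
  linarith

lemma integral_affine (p q a b : ℝ) :
    ∫ t in a..b, (p + q * t) = p * (b - a) + q * ((b^2 - a^2)/2) := by
  rw [intervalIntegral.integral_add intervalIntegrable_const
    ((show Continuous fun t : ℝ => q * t from continuous_const.mul continuous_id').intervalIntegrable _ _),
    intervalIntegral.integral_const, intervalIntegral.integral_const_mul, integral_id]
  simp [smul_eq_mul]; ring

lemma chord_upper {a : ℝ} (ha : 0 < a) : F a ≤ (f a + f (a+1)) / 2 := by
  set p : ℝ := f a - a * (f (a+1) - f a) with hp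
  set q : ℝ := f (a+1) - f a with hq
  have hpt : ∀ t ∈ Icc a (a+1), f t ≤ p + q * t := by
    intro t ht
    set s : ℝ := t - a with hs
    have hs0 : 0 ≤ s := by simp [hs]; linarith [ht.1]
    have hs1 : s ≤ 1 := by simp [hs]; linarith [ht.2]
    have hcx := Real.convexOn_log_Gamma.2 (mem_Ioi.mpr ha)
      (mem_Ioi.mpr (by linarith : (0:ℝ) < a + 1)) (by linarith : (0:ℝ) ≤ 1 - s) hs0
      (by ring)
    rw [comp_eq] at hcx
    have harg : (1-s) • a + s • (a+1) = t := by simp [smul_eq_mul]; ring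
    rw [harg] at hcx
    have hrhs : (1-s) • f a + s • f (a+1) = p + q * t := by
      simp only [smul_eq_mul, hp, hq, hs]; ring
    linarith [hrhs ▸ hcx]
  have hmono := intervalIntegral.integral_mono_on (by linarith : a ≤ a+1)
    (intInt ha.le (by linarith)) ((show Continuous fun t : ℝ => p + q * t from continuous_const.add
      (continuous_const.mul continuous_id')).intervalIntegrable _ _) hpt
  rw [integral_affine] at hmono
  have : p * (a + 1 - a) + q * (((a+1)^2 - a^2)/2) = (f a + f (a+1)) / 2 := by
    simp only [hp, hq]; ring
  rw [this] at hmono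
  exact hmono

lemma chord_lower {a : ℝ} (ha : 0 < a) :
    f (a+1) - (f (a+2) - f (a+1)) / 2 ≤ F a := by
  set q : ℝ := f (a+2) - f (a+1) with hq
  set p : ℝ := f (a+1) - q * (a+1) with hp
  have hpt : ∀ t ∈ Icc a (a+1), p + q * t ≤ f t := by
    intro t ht
    rcases eq_or_lt_of_le ht.2 with heq | hlt
    · rw [heq]
      have : p + q * (a+1) = f (a+1) := by rw [hp]; ring
      rw [this]
    · have hs := Real.convexOn_log_Gamma.slope_mono_adjacent
        (mem_Ioi.mpr (lt_of_lt_of_le ha ht.1))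
        (mem_Ioi.mpr (by linarith : (0:ℝ) < a + 2)) hlt
        (by linarith : a + 1 < a + 2)
      rw [comp_eq] at hs
      have hd : a + 2 - (a + 1) = 1 := by ring
      rw [hd, div_one] at hs
      rw [div_le_iff₀ (by linarith : (0:ℝ) < a + 1 - t)] at hs
      have hexp : (f (a+2) - f (a+1)) * (a + 1 - t) = q * (a+1) - q * t := by
        rw [hq]; ring
      rw [hexp] at hs
      have hpe : p = f (a+1) - q * (a+1) := hp
      linarith
  have hmono := intervalIntegral.integral_mono_on (by linarith : a ≤ a+1)
    ((show Continuous fun t : ℝ => p + q * t from continuous_const.add (continuous_const.mul continuous_id')).intervalIntegrable _ _)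
    (intInt ha.le (by linarith)) hpt
  rw [integral_affine] at hmono
  have : p * (a + 1 - a) + q * (((a+1)^2 - a^2)/2) = f (a+1) - q / 2 := by
    rw [hp]; ring
  rw [this] at hmono
  have : f (a+1) - (f (a+2) - f (a+1)) / 2 = f (a+1) - q / 2 := by rw [hq]
  rw [this]
  exact hmono

lemma fact_val (n : ℕ) : f ((n:ℝ)+1) = Real.log (n.factorial : ℝ) := by
  rw [f, Real.Gamma_nat_eq_factorial]

lemma log_fact_succ (n : ℕ) :
    Real.log ((n+1).factorial : ℝ) = Real.log ((n:ℝ)+1) + Real.log (n.factorial : ℝ) := by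
  rw [Nat.factorial_succ]
  push_cast
  rw [Real.log_mul (by positivity) (by exact_mod_cast (Nat.cast_pos.mpr n.factorial_pos).ne')]

lemma H_bounds (n : ℕ) :
    Real.log (Stirling.stirlingSeq (n+1)) + 1/2 * Real.log 2
        - 1/2 * (Real.log ((n:ℝ)+2) - Real.log ((n:ℝ)+1)) ≤ H ((n:ℝ)+1) ∧
    H ((n:ℝ)+1) ≤ Real.log (Stirling.stirlingSeq (n+1)) + 1/2 * Real.log 2 := by
  have hm : (0:ℝ) < (n:ℝ)+1 := by positivity
  have h1 := chord_upper hm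
  have h2 := chord_lower hm
  have e1 : f ((n:ℝ)+1) = Real.log (n.factorial : ℝ) := fact_val n
  have e2 : f ((n:ℝ)+1+1) = Real.log ((n+1).factorial : ℝ) := by
    rw [show ((n:ℝ)+1+1) = ((n+1:ℕ):ℝ)+1 by push_cast; ring, fact_val]
  have e3 : f ((n:ℝ)+1+2) = Real.log ((n+2).factorial : ℝ) := by
    rw [show ((n:ℝ)+1+2) = ((n+2:ℕ):ℝ)+1 by push_cast; ring, fact_val]
  have hst := Stirling.log_stirlingSeq_formula (n+1)
  push_cast at hst
  rw [Real.log_mul two_ne_zero (by positivity : ((n:ℝ)+1) ≠ 0),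
      Real.log_div (by positivity : ((n:ℝ)+1) ≠ 0) (Real.exp_ne_zero 1),
      Real.log_exp] at hst
  have hexp : ((n:ℝ)+1) * (Real.log ((n:ℝ)+1) - 1)
      = ((n:ℝ)+1) * Real.log ((n:ℝ)+1) - ((n:ℝ)+1) := by ring
  rw [hexp] at hst
  have hfs1 := log_fact_succ n
  have hfs2 := log_fact_succ (n+1)
  rw [show n+1+1 = n+2 from rfl, show (((n+1:ℕ)):ℝ)+1 = (n:ℝ)+2 by push_cast; ring] at hfs2
  rw [e1, e2] at h1
  rw [e2, e3] at h2
  constructor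
  · simp only [H]
    linarith [h1, h2, hst, hfs1, hfs2]
  · simp only [H]
    linarith [h1, h2, hst, hfs1, hfs2]

lemma H_eq {x : ℝ} (hx : 0 < x) : H x = Real.log (2*π) / 2 := by
  have hC : ∀ {y : ℝ}, 0 < y → H y = H 1 := fun hy => H_const hy one_pos
  have hS : Tendsto (fun n : ℕ => Stirling.stirlingSeq (n+1)) atTop (𝓝 (Real.sqrt π)) :=
    Stirling.tendsto_stirlingSeq_sqrt_pi.comp (tendsto_add_atTop_nat 1)
  have hlog : Tendsto (fun n : ℕ => Real.log (Stirling.stirlingSeq (n+1))) atTop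
      (𝓝 (Real.log (Real.sqrt π))) :=
    ((Real.continuousAt_log (Real.sqrt_pos.mpr Real.pi_pos).ne').tendsto).comp hS
  have hu : Tendsto (fun n : ℕ => Real.log (Stirling.stirlingSeq (n+1)) + 1/2 * Real.log 2)
      atTop (𝓝 (Real.log (2*π)/2)) := by
    have h := hlog.add (tendsto_const_nhds (x := 1/2 * Real.log 2))
    have he : Real.log (Real.sqrt π) + 1/2 * Real.log 2 = Real.log (2*π)/2 := by
      rw [Real.log_sqrt Real.pi_pos.le, Real.log_mul two_ne_zero Real.pi_pos.ne']
      ring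
    rwa [he] at h
  have herr : Tendsto (fun n : ℕ => 1/2 * (Real.log ((n:ℝ)+2) - Real.log ((n:ℝ)+1)))
      atTop (𝓝 0) := by
    have h1 : ∀ n : ℕ, Real.log ((n:ℝ)+2) - Real.log ((n:ℝ)+1)
        = Real.log (1 + 1/((n:ℝ)+1)) := by
      intro n
      rw [← Real.log_div (by positivity) (by positivity)]
      congr 1
      field_simp
      ring
    have h3 : Tendsto (fun n : ℕ => ((n:ℝ)+1)) atTop atTop :=
      tendsto_natCast_atTop_atTop.atTop_add tendsto_const_nhds
    have h2 : Tendsto (fun n : ℕ => 1 + 1/((n:ℝ)+1)) atTop (𝓝 1) := by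
      have h4 := (tendsto_const_nhds (x := (1:ℝ)) (f := (atTop : Filter ℕ))).add
        h3.inv_tendsto_atTop
      simpa [one_div] using h4
    have h5 : Tendsto (fun n : ℕ => Real.log (1 + 1/((n:ℝ)+1))) atTop (𝓝 0) := by
      have := ((Real.continuousAt_log one_ne_zero).tendsto).comp h2
      rw [Real.log_one] at this; exact this
    simp_rw [h1]
    simpa using h5.const_mul (1/2 : ℝ)
  have hub : H 1 ≤ Real.log (2*π)/2 := by
    apply ge_of_tendsto hu
    filter_upwards with n
    have h := (H_bounds n).2
    rwa [hC (by positivity : (0:ℝ) < (n:ℝ)+1)] at h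
  have hlb : Real.log (2*π)/2 ≤ H 1 := by
    have h := le_of_tendsto (hu.sub herr) (Filter.Eventually.of_forall fun n => by
      have h := (H_bounds n).1
      rwa [hC (by positivity : (0:ℝ) < (n:ℝ)+1)] at h)
    simpa using h
  rw [hC hx]
  linarith

lemma raabe {x : ℝ} (hx : 0 < x) : F x = x * Real.log x - x + Real.log (2*π)/2 := by
  have h := H_eq hx
  simp only [H] at h
  linarith

lemma int01 : (∫ t in (0:ℝ)..1, f t) = Real.log (2*π)/2 := by
  have hIc : ContinuousOn I (uIcc (0:ℝ) 2) :=
    continuousOn_primitive_interval' (intInt le_rfl (by norm_num)) left_mem_uIcc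
  have hmem : Icc (0:ℝ) 2 ∈ 𝓝[>] (0:ℝ) :=
    mem_nhdsWithin.mpr ⟨Iio 1, isOpen_Iio, by norm_num,
      fun y hy => ⟨hy.2.le, by linarith [hy.1.out]⟩⟩
  have huIcc : uIcc (0:ℝ) 2 = Icc 0 2 := uIcc_of_le (by norm_num)
  have hT0 : Tendsto I (𝓝[>] (0:ℝ)) (𝓝 (I 0)) := by
    have h := (hIc 0 (by rw [huIcc]; exact ⟨le_rfl, by norm_num⟩)).tendsto
    exact h.mono_left (nhdsWithin_le_of_mem (by rwa [huIcc]))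
  have hT1 : Tendsto (fun x : ℝ => I (x+1)) (𝓝[>] (0:ℝ)) (𝓝 (I 1)) := by
    have hc1 : ContinuousWithinAt I (uIcc (0:ℝ) 2) 1 :=
      hIc 1 (by rw [huIcc]; exact ⟨by norm_num, by norm_num⟩)
    apply hc1.tendsto.comp
    apply tendsto_nhdsWithin_of_tendsto_nhds_of_eventually_within
    · have h := (continuous_id.add (continuous_const (y := (1:ℝ)))).tendsto 0
      simp only [Pi.add_apply, id, zero_add] at h
      exact h.mono_left nhdsWithin_le_nhds
    · filter_upwards [Ioo_mem_nhdsGT_of_mem (left_mem_Ico.mpr one_pos)] with y hy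
      rw [huIcc]
      exact ⟨by linarith [hy.1], by linarith [hy.2]⟩
  have hF0 : Tendsto F (𝓝[>] (0:ℝ)) (𝓝 (∫ t in (0:ℝ)..1, f t)) := by
    have h := hT1.sub hT0
    have he : I 1 - I 0 = ∫ t in (0:ℝ)..1, f t := by
      simp [I, intervalIntegral.integral_same]
    rw [he] at h
    apply Filter.Tendsto.congr' _ h
    filter_upwards [self_mem_nhdsWithin] with y hy
    exact (F_eq (le_of_lt hy)).symm
  have hF1 : Tendsto F (𝓝[>] (0:ℝ)) (𝓝 (Real.log (2*π)/2)) := by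
    apply Filter.Tendsto.congr' (f₁ := fun x : ℝ => x * Real.log x - x + Real.log (2*π)/2)
    · filter_upwards [self_mem_nhdsWithin] with y hy using (raabe hy).symm
    · have hcont : Continuous (fun x : ℝ => x * Real.log x - x + Real.log (2*π)/2) :=
        (Real.continuous_mul_log.sub continuous_id).add continuous_const
      have h := hcont.tendsto 0
      norm_num [Real.log_zero] at h
      exact h.mono_left nhdsWithin_le_nhds
  exact tendsto_nhds_unique hF0 hF1

end KinkelinAux

/-- Kinkelin's G-function:
`G̃(x) = exp(∫₀^x log Γ(t) dt + x(x-1)/2 - (x/2) log(2π))`. -/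
noncomputable def kinkelinG (x : ℝ) : ℝ :=
  Real.exp ((∫ t in (0:ℝ)..x, Real.log (Real.Gamma t)) + x * (x - 1) / 2 -
    x / 2 * Real.log (2 * π))

/-- Kinkelin's G-function satisfies `G̃(x+1) = G̃(x) · x^x` for all `x > 0`,
and `G̃(0) = G̃(1) = 1`. -/
theorem kinkelinG_functional_equation :
    (∀ x : ℝ, 0 < x → kinkelinG (x + 1) = kinkelinG x * x ^ x) ∧
      kinkelinG 0 = 1 ∧ kinkelinG 1 = 1 := by
  refine ⟨?_, ?_, ?_⟩
  · intro x hx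
    have hF : (∫ t in (0:ℝ)..(x+1), Real.log (Real.Gamma t))
        = (∫ t in (0:ℝ)..x, Real.log (Real.Gamma t))
          + (x * Real.log x - x + Real.log (2*π)/2) := by
      have h1 : KinkelinAux.I (x+1) - KinkelinAux.I x = KinkelinAux.F x :=
        (KinkelinAux.F_eq hx.le).symm
      have h2 := KinkelinAux.raabe hx
      show KinkelinAux.I (x+1) = KinkelinAux.I x + (x * Real.log x - x + Real.log (2*π)/2)
      linarith
    simp only [kinkelinG]
    rw [hF, Real.rpow_def_of_pos hx, ← Real.exp_add]
    congr 1
    ring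
  · simp [kinkelinG]
  · have h : (∫ t in (0:ℝ)..1, Real.log (Real.Gamma t)) = Real.log (2*π)/2 :=
      KinkelinAux.int01
    simp only [kinkelinG]
    rw [h]
    norm_num
    ring
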